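/- Let T be a triangle in ℝ². Then the set {μ ∈ ℝ : the sheared triangle A_μ T is equilateral}, where A_μ = [[1, μ],[0, 1]], contains at most two elements. -/

import Mathlib

/-- The shear map A_μ = [[1, μ],[0, 1]] on the Euclidean plane. -/
def shear (μ : ℝ) (p : EuclideanSpace ℝ (Fin 2)) : EuclideanSpace ℝ (Fin 2) :=
  WithLp.toLp 2 ![p 0 + μ * p 1, p 1]

lemma quad_roots (A B C : ℝ) (h : ¬(A = 0 ∧ B = 0 ∧ C = 0)) :
    ∃ μ₁ μ₂ : ℝ, {μ : ℝ | A * μ ^ 2 + B * μ + C = 0} ⊆ {μ₁, μ₂} := by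
  by_cases hA : A = 0
  · by_cases hB : B = 0
    · refine ⟨0, 0, fun μ hμ => ?_⟩
      simp only [Set.mem_setOf_eq, hA, hB, zero_mul, zero_add] at hμ
      exact absurd ⟨hA, hB, hμ⟩ h
    · refine ⟨-C / B, -C / B, fun μ hμ => ?_⟩
      simp only [Set.mem_setOf_eq, hA, zero_mul, zero_add] at hμ
      have : μ = -C / B := by field_simp; linarith
      simp [this]
  · refine ⟨(-B + Real.sqrt (B ^ 2 - 4 * A * C)) / (2 * A),
      (-B - Real.sqrt (B ^ 2 - 4 * A * C)) / (2 * A), fun μ hμ => ?_⟩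
    simp only [Set.mem_setOf_eq] at hμ
    have key : (2 * A * μ + B) ^ 2 = B ^ 2 - 4 * A * C := by linear_combination 4 * A * hμ
    have hs : Real.sqrt (B ^ 2 - 4 * A * C) = |2 * A * μ + B| := by
      rw [← key, Real.sqrt_sq_eq_abs]
    rcases abs_cases (2 * A * μ + B) with ⟨h1, _⟩ | ⟨h1, _⟩
    · left; rw [hs, h1]; field_simp; ring
    · right; rw [hs, h1, Set.mem_singleton_iff, eq_div_iff (mul_ne_zero two_ne_zero hA)]; ring

lemma dist_shear (μ : ℝ) (x y : EuclideanSpace ℝ (Fin 2)) :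
    dist (shear μ x) (shear μ y) =
      Real.sqrt (((x 0 - y 0) + μ * (x 1 - y 1)) ^ 2 + (x 1 - y 1) ^ 2) := by
  rw [EuclideanSpace.dist_eq, Fin.sum_univ_two]
  simp only [shear, PiLp.toLp_apply, Matrix.cons_val_zero, Matrix.cons_val_one, Matrix.head_cons,
    Real.dist_eq, sq_abs]
  ring_nf

lemma dist_shear_eq_iff (μ : ℝ) (x y z w : EuclideanSpace ℝ (Fin 2)) :
    dist (shear μ x) (shear μ y) = dist (shear μ z) (shear μ w) ↔
      ((x 0 - y 0) + μ * (x 1 - y 1)) ^ 2 + (x 1 - y 1) ^ 2 =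
        ((z 0 - w 0) + μ * (z 1 - w 1)) ^ 2 + (z 1 - w 1) ^ 2 := by
  rw [dist_shear, dist_shear, Real.sqrt_inj (by positivity) (by positivity)]

/-- q + s + u = 0 and equal squares force q = s = u = 0. -/
lemma zero_of_sq_eq (q s u : ℝ) (hsum : q + s + u = 0) (hq2 : q ^ 2 = s ^ 2)
    (hs2 : s ^ 2 = u ^ 2) : q = 0 ∧ s = 0 := by
  have hqs : (q - s) * (q + s) = 0 := by linear_combination hq2
  have hu' : u = -q - s := by linarith
  rcases mul_eq_zero.1 hqs with h | h
  · -- q = s, u = -2q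
    have hq : q = s := by linarith
    have h4 : q ^ 2 = 0 := by
      have : s ^ 2 = (-q - s) ^ 2 := by rw [← hu']; exact hs2
      nlinarith [this]
    have : q = 0 := by
      have := (pow_eq_zero_iff (two_ne_zero)).1 h4
      exact this
    exact ⟨this, by linarith⟩
  · -- s = -q, u = 0
    have hu0 : u = 0 := by linarith
    have hs0 : s ^ 2 = 0 := by rw [hs2, hu0]; ring
    have hs0' : s = 0 := (pow_eq_zero_iff (two_ne_zero)).1 hs0
    have hq0 : q ^ 2 = 0 := by rw [hq2, hs0']; ring
    exact ⟨(pow_eq_zero_iff (two_ne_zero)).1 hq0, hs0'⟩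

/-- the set of μ for which the sheared triangle A_μ T is equilateral has
at most two elements. -/
theorem stmt_10 (v : Fin 3 → EuclideanSpace ℝ (Fin 2))
    (hv : AffineIndependent ℝ v) :
    ∃ μ₁ μ₂ : ℝ,
      {μ : ℝ | dist (shear μ (v 0)) (shear μ (v 1)) = dist (shear μ (v 1)) (shear μ (v 2)) ∧
        dist (shear μ (v 1)) (shear μ (v 2)) = dist (shear μ (v 2)) (shear μ (v 0))}
        ⊆ {μ₁, μ₂} := by
  obtain ⟨p, hp⟩ : ∃ p : ℝ, p = v 0 0 - v 1 0 := ⟨_, rfl⟩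
  obtain ⟨q, hq⟩ : ∃ q : ℝ, q = v 0 1 - v 1 1 := ⟨_, rfl⟩
  obtain ⟨r, hr⟩ : ∃ r : ℝ, r = v 1 0 - v 2 0 := ⟨_, rfl⟩
  obtain ⟨s, hs⟩ : ∃ s : ℝ, s = v 1 1 - v 2 1 := ⟨_, rfl⟩
  obtain ⟨t, ht⟩ : ∃ t : ℝ, t = v 2 0 - v 0 0 := ⟨_, rfl⟩
  obtain ⟨u, hu⟩ : ∃ u : ℝ, u = v 2 1 - v 0 1 := ⟨_, rfl⟩
  have hc1 : ∀ μ : ℝ, dist (shear μ (v 0)) (shear μ (v 1)) = dist (shear μ (v 1)) (shear μ (v 2)) →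
      (q ^ 2 - s ^ 2) * μ ^ 2 + (2 * (p * q - r * s)) * μ + (p ^ 2 + q ^ 2 - r ^ 2 - s ^ 2) = 0 := by
    intro μ hμ
    rw [dist_shear_eq_iff] at hμ
    rw [hp, hq, hr, hs]
    linear_combination hμ
  have hc2 : ∀ μ : ℝ, dist (shear μ (v 1)) (shear μ (v 2)) = dist (shear μ (v 2)) (shear μ (v 0)) →
      (s ^ 2 - u ^ 2) * μ ^ 2 + (2 * (r * s - t * u)) * μ + (r ^ 2 + s ^ 2 - t ^ 2 - u ^ 2) = 0 := by
    intro μ hμ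
    rw [dist_shear_eq_iff] at hμ
    rw [hr, hs, ht, hu]
    linear_combination hμ
  by_cases hA : q ^ 2 - s ^ 2 = 0 ∧ 2 * (p * q - r * s) = 0 ∧ p ^ 2 + q ^ 2 - r ^ 2 - s ^ 2 = 0
  · have hB : ¬((s ^ 2 - u ^ 2) = 0 ∧ 2 * (r * s - t * u) = 0 ∧
        (r ^ 2 + s ^ 2 - t ^ 2 - u ^ 2) = 0) := by
      rintro ⟨h1, _, _⟩
      have hsum : q + s + u = 0 := by rw [hq, hs, hu]; ring
      obtain ⟨hq0, hs0⟩ := zero_of_sq_eq q s u hsum (by linarith [hA.1]) (by linarith)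
      -- all second coordinates are equal
      have e1 : v 0 1 = v 1 1 := by rw [hq] at hq0; linarith
      have e2 : v 1 1 = v 2 1 := by rw [hs] at hs0; linarith
      -- affine dependence with weights (r, t, p)
      have c0 : r * v 0 0 + t * v 1 0 + p * v 2 0 = 0 := by rw [hp, hr, ht]; ring
      have c1 : r * v 0 1 + t * v 1 1 + p * v 2 1 = 0 := by
        rw [hp, hr, ht, e1, e2]; ring
      have hw0 : (r • v 0 + t • v 1 + p • v 2 : EuclideanSpace ℝ (Fin 2)) = 0 := by
        apply PiLp.ext
        intro i
        fin_cases i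
        · show r * v 0 0 + t * v 1 0 + p * v 2 0 = 0
          exact c0
        · show r * v 0 1 + t * v 1 1 + p * v 2 1 = 0
          exact c1
      have hall := affineIndependent_iff.1 hv Finset.univ ![r, t, p]
        (by rw [Fin.sum_univ_three]; simp only [Matrix.cons_val_zero, Matrix.cons_val_one,
            Matrix.head_cons, Matrix.cons_val_two, Matrix.tail_cons]
            rw [hp, hr, ht]; ring)
        (by rw [Fin.sum_univ_three]; simpa using hw0)
      have hr0 : r = 0 := by simpa using hall 0 (Finset.mem_univ _)
      have hp0 : p = 0 := by simpa using hall 2 (Finset.mem_univ _)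
      have hv01 : v 0 = v 1 := by
        apply PiLp.ext
        intro i
        fin_cases i
        · show v 0 0 = v 1 0
          rw [hp] at hp0; linarith
        · show v 0 1 = v 1 1
          exact e1
      exact absurd (hv.injective hv01) (by decide)
    obtain ⟨μ₁, μ₂, hsub⟩ := quad_roots _ _ _ hB
    exact ⟨μ₁, μ₂, fun μ hμ => hsub (hc2 μ hμ.2)⟩
  · obtain ⟨μ₁, μ₂, hsub⟩ := quad_roots _ _ _ hA
    exact ⟨μ₁, μ₂, fun μ hμ => hsub (hc1 μ hμ.1)⟩
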